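/- (Inexact proximal-gradient descent.) Let E = ℝ^d with the Euclidean norm, let f : E → ℝ be differentiable with L-Lipschitz gradient, let r : E → ℝ be convex, and set u := f + r. Let α > 0, ξ > 0, and x, y ∈ E, and let x⁺ be a global minimizer over E of z ↦ r(z) + (1/(2α))‖z − (x − α y)‖². Then u(x⁺) ≤ u(x) − (1/α − L/2 − ξ/2)·‖x⁺ − x‖² + (1/(2ξ))·‖y − ∇f(x)‖². -/

import Mathlib

open intervalIntegral

variable {d : ℕ}

local notation "E" => EuclideanSpace ℝ (Fin d)

lemma line_deriv (f : E → ℝ) (hdiff : Differentiable ℝ f) (a v : E) (t : ℝ) :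
    HasDerivAt (fun s : ℝ => f (a + s • v)) (inner ℝ (gradient f (a + t • v)) v : ℝ) t := by
  have hc : HasDerivAt (fun s : ℝ => a + s • v) v t := by
    simpa using ((hasDerivAt_id t).smul_const v).const_add a
  have hf : HasFDerivAt f (InnerProductSpace.toDual ℝ E (gradient f (a + t • v))) (a + t • v) :=
    hasGradientAt_iff_hasFDerivAt.mp (hdiff (a + t • v)).hasGradientAt
  convert hf.comp_hasDerivAt t hc using 1 <;> rfl

lemma descent (f : E → ℝ) (L : ℝ) (hdiff : Differentiable ℝ f)
    (hlip : ∀ a b : E, ‖gradient f a - gradient f b‖ ≤ L * ‖a - b‖) (a b : E) :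
    f b ≤ f a + inner ℝ (gradient f a) (b - a) + L / 2 * ‖b - a‖ ^ 2 := by
  set v := b - a with hv
  have hcg : Continuous (gradient f) := by
    have : LipschitzWith (Real.toNNReal L) (gradient f) := by
      intro p q
      rw [edist_dist, edist_dist]
      have := hlip p q
      rw [ENNReal.ofReal_le_iff_le_toReal (by simp [ENNReal.mul_eq_top])]
      simp only [ENNReal.toReal_mul, ENNReal.coe_toReal, ENNReal.toReal_ofReal dist_nonneg]
      calc dist (gradient f p) (gradient f q) = ‖gradient f p - gradient f q‖ := by
            rw [dist_eq_norm]
        _ ≤ L * ‖p - q‖ := hlip p q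
        _ ≤ (Real.toNNReal L) * dist p q := by
            rw [dist_eq_norm]
            exact mul_le_mul_of_nonneg_right (Real.le_coe_toNNReal L) (norm_nonneg _)
    exact this.continuous
  have hcont : Continuous (fun t : ℝ => (inner ℝ (gradient f (a + t • v)) v : ℝ)) := by
    exact (hcg.comp (by continuity)).inner continuous_const
  have hint : f (a + (1:ℝ) • v) - f (a + (0:ℝ) • v)
      = ∫ t in (0:ℝ)..1, (inner ℝ (gradient f (a + t • v)) v : ℝ) := by
    refine (intervalIntegral.integral_eq_sub_of_hasDerivAt (fun t _ => line_deriv f hdiff a v t)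
      (hcont.intervalIntegrable 0 1)).symm
  have hmono : ∫ t in (0:ℝ)..1, (inner ℝ (gradient f (a + t • v)) v : ℝ)
      ≤ ∫ t in (0:ℝ)..1, ((inner ℝ (gradient f a) v : ℝ) + L * t * ‖v‖ ^ 2) := by
    apply intervalIntegral.integral_mono_on zero_le_one (hcont.intervalIntegrable 0 1)
      ((by continuity : Continuous fun t : ℝ => (inner ℝ (gradient f a) v : ℝ) + L * t * ‖v‖ ^ 2).intervalIntegrable 0 1)
    intro t ht
    rcases ht with ⟨ht0, ht1⟩
    have h1 : (inner ℝ (gradient f (a + t • v)) v : ℝ) - inner ℝ (gradient f a) v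
        = inner ℝ (gradient f (a + t • v) - gradient f a) v := by
      rw [inner_sub_left]
    have h2 : (inner ℝ (gradient f (a + t • v) - gradient f a) v : ℝ)
        ≤ ‖gradient f (a + t • v) - gradient f a‖ * ‖v‖ := real_inner_le_norm _ _
    have h3 : ‖gradient f (a + t • v) - gradient f a‖ ≤ L * ‖t • v‖ := by
      simpa using hlip (a + t • v) a
    have h4 : ‖t • v‖ = t * ‖v‖ := by
      rw [norm_smul, Real.norm_eq_abs, abs_of_nonneg ht0]
    rw [h4] at h3
    have h5 : ‖gradient f (a + t • v) - gradient f a‖ * ‖v‖ ≤ L * t * ‖v‖ ^ 2 := by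
      nlinarith [norm_nonneg v, norm_nonneg (gradient f (a + t • v) - gradient f a)]
    linarith
  have hval : ∫ t in (0:ℝ)..1, ((inner ℝ (gradient f a) v : ℝ) + L * t * ‖v‖ ^ 2)
      = inner ℝ (gradient f a) v + L / 2 * ‖v‖ ^ 2 := by
    rw [intervalIntegral.integral_add (intervalIntegrable_const)
      ((by fun_prop : Continuous fun t : ℝ => L * t * ‖v‖ ^ 2).intervalIntegrable 0 1)]
    simp only [intervalIntegral.integral_const, smul_eq_mul]
    have : ∫ t in (0:ℝ)..1, L * t * ‖v‖ ^ 2 = L / 2 * ‖v‖ ^ 2 := by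
      have : (fun t : ℝ => L * t * ‖v‖ ^ 2) = fun t : ℝ => (L * ‖v‖ ^ 2) * t := by
        ext t; ring
      rw [this, intervalIntegral.integral_const_mul, integral_id]
      ring
    rw [this]; ring
  have hb : a + (1:ℝ) • v = b := by simp [hv]
  have ha : a + (0:ℝ) • v = a := by simp
  rw [hb, ha] at hint
  linarith [hint ▸ (hmono.trans_eq hval)]

/-- Inexact proximal-gradient descent: with `f` differentiable with `L`-Lipschitz
gradient, `r` convex, `u = f + r`, and `x⁺` a global minimizer of
`z ↦ r z + (1/(2α))‖z − (x − α y)‖²`, one has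
`u(x⁺) ≤ u(x) − (1/α − L/2 − ξ/2)‖x⁺ − x‖² + (1/(2ξ))‖y − ∇f(x)‖²`. -/
theorem stmt12 (d : ℕ) (f : EuclideanSpace ℝ (Fin d) → ℝ) (L : ℝ)
    (hdiff : Differentiable ℝ f)
    (hlip : ∀ a b : EuclideanSpace ℝ (Fin d), ‖gradient f a - gradient f b‖ ≤ L * ‖a - b‖)
    (r : EuclideanSpace ℝ (Fin d) → ℝ) (hr : ConvexOn ℝ Set.univ r)
    (α ξ : ℝ) (hα : 0 < α) (hξ : 0 < ξ)
    (x y xp : EuclideanSpace ℝ (Fin d))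
    (hxp : IsMinOn (fun z => r z + (1 / (2 * α)) * ‖z - (x - α • y)‖ ^ 2) Set.univ xp) :
    f xp + r xp ≤ (f x + r x) - (1 / α - L / 2 - ξ / 2) * ‖xp - x‖ ^ 2
      + (1 / (2 * ξ)) * ‖y - gradient f x‖ ^ 2 := by
  set v : EuclideanSpace ℝ (Fin d) := xp - (x - α • y) with hvdef
  set w : EuclideanSpace ℝ (Fin d) := x - xp with hwdef
  set c : ℝ := 1 / (2 * α) with hcdef
  have hc : 0 < c := by positivity
  -- step 1: r xp ≤ r x + 2c⟪v,w⟫ + t c ‖w‖² for all small t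
  have key2 : ∀ t : ℝ, 0 < t → t ≤ 1 →
      r xp ≤ r x + 2 * c * (inner ℝ v w : ℝ) + t * (c * ‖w‖ ^ 2) := by
    intro t ht ht1
    set z : EuclideanSpace ℝ (Fin d) := xp + t • w with hzdef
    have hm : r xp + c * ‖xp - (x - α • y)‖ ^ 2 ≤ r z + c * ‖z - (x - α • y)‖ ^ 2 :=
      isMinOn_iff.mp hxp z (Set.mem_univ z)
    have hz2 : z = (1 - t) • xp + t • x := by
      rw [hzdef, hwdef]; module
    have hconv : r z ≤ (1 - t) * r xp + t * r x := by
      rw [hz2]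
      exact hr.2 (Set.mem_univ xp) (Set.mem_univ x) (by linarith) ht.le (by ring)
    have hz3 : z - (x - α • y) = v + t • w := by
      rw [hzdef, hvdef]; module
    have expand : ‖v + t • w‖ ^ 2 = ‖v‖ ^ 2 + 2 * (t * (inner ℝ v w : ℝ)) + t ^ 2 * ‖w‖ ^ 2 := by
      rw [norm_add_sq_real, real_inner_smul_right, norm_smul, Real.norm_eq_abs,
        abs_of_nonneg ht.le, mul_pow]
    rw [hz3, expand] at hm
    have h7 : t * r xp ≤ t * (r x + 2 * c * (inner ℝ v w : ℝ) + t * (c * ‖w‖ ^ 2)) := by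
      nlinarith [hm, hconv]
    exact (mul_le_mul_iff_right₀ ht).mp h7
  have key3 : r xp ≤ r x + 2 * c * (inner ℝ v w : ℝ) := by
    refine le_of_forall_pos_le_add ?_
    intro ε hε
    set D : ℝ := c * ‖w‖ ^ 2 with hD
    have hD0 : 0 ≤ D := by positivity
    set t : ℝ := min 1 (ε / (D + 1)) with htdef
    have ht0 : 0 < t := lt_min one_pos (by positivity)
    have ht1 : t ≤ 1 := min_le_left _ _
    have ht2 : t * (D + 1) ≤ ε := by
      have := min_le_right 1 (ε / (D + 1))
      calc t * (D + 1) ≤ (ε / (D + 1)) * (D + 1) :=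
            mul_le_mul_of_nonneg_right this (by linarith)
        _ = ε := by field_simp
    have htD : t * D ≤ ε := by nlinarith
    have := key2 t ht0 ht1
    linarith
  -- step 2: compute the inner product
  have hvw : (inner ℝ v w : ℝ) = -‖xp - x‖ ^ 2 + α * (inner ℝ y w : ℝ) := by
    have hv2 : v = (xp - x) + α • y := by rw [hvdef]; module
    rw [hv2, inner_add_left, real_inner_smul_left]
    congr 1
    rw [hwdef, show x - xp = -(xp - x) from (neg_sub xp x).symm, inner_neg_right,
      real_inner_self_eq_norm_sq]
  have hyw : (inner ℝ y w : ℝ) = -(inner ℝ y (xp - x) : ℝ) := by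
    rw [hwdef, show x - xp = -(xp - x) from (neg_sub xp x).symm, inner_neg_right]
  -- step 3: descent lemma
  have hdes := descent f L hdiff hlip x xp
  -- step 4: Young's inequality
  have h1 : (inner ℝ (gradient f x - y) (xp - x) : ℝ) ≤ ‖y - gradient f x‖ * ‖xp - x‖ := by
    calc (inner ℝ (gradient f x - y) (xp - x) : ℝ)
        ≤ ‖gradient f x - y‖ * ‖xp - x‖ := real_inner_le_norm _ _
      _ = ‖y - gradient f x‖ * ‖xp - x‖ := by rw [norm_sub_rev]
    
  have hy2 : (inner ℝ (gradient f x - y) (xp - x) : ℝ)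
      ≤ ξ / 2 * ‖xp - x‖ ^ 2 + 1 / (2 * ξ) * ‖y - gradient f x‖ ^ 2 := by
    rw [show ξ / 2 * ‖xp - x‖ ^ 2 + 1 / (2 * ξ) * ‖y - gradient f x‖ ^ 2
        = (ξ ^ 2 * ‖xp - x‖ ^ 2 + ‖y - gradient f x‖ ^ 2) / (2 * ξ) by field_simp]
    rw [le_div_iff₀ (by positivity)]
    nlinarith [sq_nonneg (ξ * ‖xp - x‖ - ‖y - gradient f x‖),
      mul_le_mul_of_nonneg_left h1 (show (0:ℝ) ≤ 2 * ξ by positivity)]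
  have hsub : (inner ℝ (gradient f x - y) (xp - x) : ℝ)
      = (inner ℝ (gradient f x) (xp - x) : ℝ) - (inner ℝ y (xp - x) : ℝ) := by
    rw [inner_sub_left]
  -- combine
  have hB : r xp ≤ r x - (1 / α) * ‖xp - x‖ ^ 2 - (inner ℝ y (xp - x) : ℝ) := by
    rw [hvw, hyw] at key3
    have hca : 2 * c * (-‖xp - x‖ ^ 2 + α * -(inner ℝ y (xp - x) : ℝ))
        = -(1 / α) * ‖xp - x‖ ^ 2 - (inner ℝ y (xp - x) : ℝ) := by
      rw [hcdef]; field_simp; ring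
    rw [hca] at key3
    linarith
  linarith [hdes, hB, hy2, hsub.symm.le, hsub.le]
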